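/- Let β > 1 be a real number, let U be a nonempty finite set, let S_1,…,S_k be subsets of U whose union is U, with positive real costs c_1,…,c_k, and let l : U → ℤ be a level assignment such that for every i ∈ {1,…,k} and every integer L, the number of elements e ∈ S_i with l(e) ≤ L is at most c_i·β^{L+3}. Then ∑_{e ∈ U} β^{−l(e)} ≤ β³·(ln |U| + 1) · ∑_{i=1}^{k} c_i. -/

import Mathlib

lemma per_set_bound {α : Type*} (β : ℝ) (hβ : 1 < β) (T : Finset α) (l : α → ℤ)
    (C : ℝ) (hC : 0 < C)
    (h : ∀ L : ℤ, ((T.filter fun e => l e ≤ L).card : ℝ) ≤ C * β ^ (L + 3)) :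
    ∑ e ∈ T, β ^ (-(l e)) ≤ C * β ^ (3 : ℕ) * (Real.log T.card + 1) := by
  have hβ0 : (0:ℝ) < β := lt_trans one_pos hβ
  set M : Multiset ℤ := T.val.map l with hM
  set s : List ℤ := M.sort (· ≤ ·) with hs
  have hlen : s.length = T.card := by
    rw [hs, Multiset.length_sort, hM, Multiset.card_map]; rfl
  have hsorted : s.Pairwise (· ≤ ·) := Multiset.pairwise_sort M _
  -- counting bound at each level
  have hcnt : ∀ L : ℤ, ((s.countP (fun x => decide (x ≤ L))) : ℝ) ≤ C * β ^ (L + 3) := by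
    intro L
    have e1 : s.countP (fun x => decide (x ≤ L)) = Multiset.countP (· ≤ L) M := by
      rw [← Multiset.coe_countP, Multiset.sort_eq]
    have e2 : Multiset.countP (· ≤ L) M = (T.filter fun e => l e ≤ L).card := by
      rw [hM, Multiset.countP_map]
      rfl
    rw [e1, e2]; exact h L
  -- key per-index bound
  have key : ∀ i : Fin s.length, β ^ (-(s.get i)) ≤ C * β ^ (3 : ℕ) / (i.1 + 1) := by
    intro i
    set L := s.get i with hL
    have h1 : i.1 + 1 ≤ s.countP (fun x => decide (x ≤ L)) := by
      have hall : ∀ a ∈ s.take (i.1 + 1), (fun x => decide (x ≤ L)) a = true := by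
        intro a ha
        obtain ⟨j, hj, rfl⟩ := List.getElem_of_mem ha
        have hjlen : j < s.length := lt_of_lt_of_le hj (by simp [List.length_take])
        rw [List.getElem_take]
        have hji : j ≤ i.1 := by
          have := hj.trans_le (by simp [List.length_take] : (s.take (i.1+1)).length ≤ i.1 + 1)
          omega
        simp only [decide_eq_true_eq]
        exact hsorted.rel_get_of_le (a := ⟨j, hjlen⟩) (b := i) hji
      calc i.1 + 1 = (s.take (i.1 + 1)).length := by
                simp [List.length_take]
        _ = (s.take (i.1 + 1)).countP (fun x => decide (x ≤ L)) :=
                (List.countP_eq_length).mpr hall |>.symm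
        _ ≤ s.countP (fun x => decide (x ≤ L)) := (List.take_sublist _ _).countP_le
    have h2 : (i.1 + 1 : ℝ) ≤ C * β ^ (L + 3) := by
      calc (i.1 + 1 : ℝ) ≤ (s.countP (fun x => decide (x ≤ L)) : ℝ) := by exact_mod_cast h1
        _ ≤ C * β ^ (L + 3) := hcnt L
    have hzpos : (0:ℝ) < β ^ L := zpow_pos hβ0 L
    rw [le_div_iff₀ (by positivity)]
    have expand : C * β ^ (L + 3) = C * β ^ (3:ℕ) * β ^ L := by
      rw [zpow_add₀ hβ0.ne', zpow_ofNat]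
      ring
    calc β ^ (-L) * (i.1 + 1 : ℝ) ≤ β ^ (-L) * (C * β ^ (L + 3)) := by
          apply mul_le_mul_of_nonneg_left h2 (le_of_lt (zpow_pos hβ0 _))
      _ = C * β ^ (3:ℕ) := by
          rw [expand, zpow_neg]
          field_simp
  -- rewrite sum over T as sum over indices of s
  have hsum : ∑ e ∈ T, β ^ (-(l e)) = ∑ i : Fin s.length, β ^ (-(s.get i)) := by
    rw [← Fin.sum_ofFn]
    have : s.map (fun L => β ^ (-L))
        = List.ofFn (fun i : Fin s.length => β ^ (-(s.get i))) := by
      conv_lhs => rw [← List.ofFn_get s]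
      rw [List.map_ofFn]
      rfl
    rw [← this]
    rw [Finset.sum]
    have : Multiset.map (fun e => β ^ (-(l e))) T.val
        = Multiset.map (fun L => β ^ (-L)) M := by
      rw [hM, Multiset.map_map]; rfl
    rw [this, ← Multiset.sort_eq M (· ≤ ·), ← hs, Multiset.map_coe, Multiset.sum_coe]
  rw [hsum]
  calc ∑ i : Fin s.length, β ^ (-(s.get i))
      ≤ ∑ i : Fin s.length, C * β ^ (3:ℕ) / (i.1 + 1) := Finset.sum_le_sum fun i _ => key i
    _ = C * β ^ (3:ℕ) * ∑ i ∈ Finset.range s.length, ((i:ℝ) + 1)⁻¹ := by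
        rw [Finset.mul_sum, ← Fin.sum_univ_eq_sum_range]
        simp [div_eq_mul_inv]
    _ = C * β ^ (3:ℕ) * (harmonic s.length : ℝ) := by
        congr 1
        rw [harmonic]
        push_cast
        rfl
    _ ≤ C * β ^ (3:ℕ) * (1 + Real.log s.length) := by
        apply mul_le_mul_of_nonneg_left (harmonic_le_one_add_log _) (by positivity)
    _ = C * β ^ (3:ℕ) * (Real.log T.card + 1) := by rw [hlen]; ring

/-- Dual-fitting bound (core of Lemma 5.1): if sets S₁,…,S_k with costs c₁,…,c_k
cover the universe U and each set contains at most cᵢ·β^{L+3} elements of level ≤ L,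
then the total dual weight of U is at most β³·(ln |U| + 1)·∑ cᵢ. -/
theorem dual_fitting_bound {α : Type*} (β : ℝ) (hβ : 1 < β) (k : ℕ)
    (U : Finset α) (hU : U.Nonempty)
    (S : Fin k → Finset α) (hsub : ∀ i, S i ⊆ U) (hcover : ∀ e ∈ U, ∃ i, e ∈ S i)
    (c : Fin k → ℝ) (hc : ∀ i, 0 < c i) (l : α → ℤ)
    (hcount : ∀ i, ∀ L : ℤ,
      ((((S i).filter fun e => l e ≤ L)).card : ℝ) ≤ c i * β ^ (L + 3)) :
    ∑ e ∈ U, β ^ (-(l e)) ≤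
      β ^ (3 : ℕ) * (Real.log U.card + 1) * ∑ i, c i := by
  classical
  have hβ0 : (0:ℝ) < β := lt_trans one_pos hβ
  obtain ⟨e₀, he₀⟩ := hU
  have hkne : Nonempty (Fin k) := ⟨(hcover e₀ he₀).choose⟩
  set g : α → Fin k := fun e =>
    if h : e ∈ U then (hcover e h).choose else Classical.arbitrary _ with hg
  have hgmem : ∀ e ∈ U, e ∈ S (g e) := by
    intro e he
    simp only [hg, dif_pos he]
    exact (hcover e he).choose_spec
  have hpart : ∑ e ∈ U, β ^ (-(l e))
      = ∑ i : Fin k, ∑ e ∈ U.filter (fun e => g e = i), β ^ (-(l e)) :=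
    (Finset.sum_fiberwise_of_maps_to (fun e _ => Finset.mem_univ (g e)) _).symm
  rw [hpart]
  have hln : (0:ℝ) ≤ Real.log U.card := by
    apply Real.log_nonneg
    exact_mod_cast Finset.card_pos.mpr ⟨e₀, he₀⟩
  have step : ∀ i : Fin k, ∑ e ∈ U.filter (fun e => g e = i), β ^ (-(l e))
      ≤ c i * β ^ (3:ℕ) * (Real.log U.card + 1) := by
    intro i
    set T := U.filter (fun e => g e = i) with hT
    have hTsub : T ⊆ S i := by
      intro e he
      rw [hT, Finset.mem_filter] at he
      obtain ⟨heU, hgi⟩ := he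
      rw [← hgi]; exact hgmem e heU
    have hcnt : ∀ L : ℤ, ((T.filter fun e => l e ≤ L).card : ℝ) ≤ c i * β ^ (L + 3) := by
      intro L
      refine le_trans ?_ (hcount i L)
      exact_mod_cast Finset.card_le_card (Finset.filter_subset_filter _ hTsub)
    refine (per_set_bound β hβ T l (c i) (hc i) hcnt).trans ?_
    have hlog : Real.log T.card ≤ Real.log U.card := by
      rcases Nat.eq_zero_or_pos T.card with h0 | h0
      · rw [h0]; simpa using hln
      · apply Real.log_le_log (by exact_mod_cast h0)
        exact_mod_cast Finset.card_le_card (hT ▸ Finset.filter_subset _ _)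
    have : Real.log T.card + 1 ≤ Real.log U.card + 1 := by linarith
    exact mul_le_mul_of_nonneg_left this (le_of_lt (mul_pos (hc i) (pow_pos hβ0 3)))
  calc ∑ i : Fin k, ∑ e ∈ U.filter (fun e => g e = i), β ^ (-(l e))
      ≤ ∑ i : Fin k, c i * β ^ (3:ℕ) * (Real.log U.card + 1) :=
        Finset.sum_le_sum fun i _ => step i
    _ = β ^ (3 : ℕ) * (Real.log U.card + 1) * ∑ i, c i := by
        rw [Finset.mul_sum]
        exact Finset.sum_congr rfl fun i _ => by ring
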